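/- If a and b are nonnegative integer sequences of length n, a is the degree sequence of an r-uniform hypergraph on [n], and b is obtained from a by a unit transformation (subtracting 1 from a coordinate a(i) and adding 1 to a coordinate a(j) where a(i) ≥ a(j) + 2), then b is also the degree sequence of an r-uniform hypergraph on [n]. -/

import Mathlib

/-- The degree of vertex `v` in the hypergraph on `[n]` with edge set `E`. -/
def rdeg {n : ℕ} (E : Finset (Finset (Fin n))) (v : Fin n) : ℕ :=
  (E.filter (fun e => v ∈ e)).card

/-- `d` is the degree sequence of an `r`-uniform hypergraph on `[n]`. -/
def IsRDegSeq (n r : ℕ) (d : Fin n → ℕ) : Prop :=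
  ∃ E : Finset (Finset (Fin n)), (∀ e ∈ E, e.card = r) ∧ ∀ v, d v = rdeg E v

/-- a unit transformation applied to the degree sequence of an
`r`-uniform hypergraph yields the degree sequence of an `r`-uniform hypergraph. -/
theorem unit_transformation_rgraphical (n r : ℕ) (a b : Fin n → ℕ)
    (ha : IsRDegSeq n r a) (i j : Fin n) (hij : i ≠ j)
    (hgap : a j + 2 ≤ a i)
    (hbi : b i = a i - 1) (hbj : b j = a j + 1)
    (hbk : ∀ k, k ≠ i → k ≠ j → b k = a k) :
    IsRDegSeq n r b := by
  classical
  obtain ⟨E, hEcard, hdeg⟩ := ha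
  set swap : Finset (Fin n) → Finset (Fin n) := fun e => insert j (e.erase i) with hswap
  have key : ∃ e ∈ E, i ∈ e ∧ j ∉ e ∧ swap e ∉ E := by
    by_contra h
    push_neg at h
    set S := E.filter (fun e => i ∈ e ∧ j ∉ e) with hS
    set T := E.filter (fun e => j ∈ e ∧ i ∉ e) with hT
    have hST : S.card ≤ T.card := by
      apply Finset.card_le_card_of_injOn swap
      · intro e he
        simp only [hS, Finset.mem_coe, Finset.mem_filter] at he
        obtain ⟨heE, hie, hje⟩ := he
        simp only [hT, Finset.mem_coe, Finset.mem_filter, swap]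
        refine ⟨h e heE hie hje, Finset.mem_insert_self _ _, ?_⟩
        simp [Finset.mem_insert, hij, Finset.mem_erase]
      · intro e1 h1 e2 h2 heq
        simp only [hS, Finset.coe_filter, Set.mem_setOf_eq] at h1 h2
        have key : ∀ e : Finset (Fin n), i ∈ e → j ∉ e →
            insert i ((swap e).erase j) = e := by
          intro e hie hje
          have : j ∉ e.erase i := fun hx => hje (Finset.mem_of_mem_erase hx)
          simp only [swap, Finset.erase_insert this]
          exact Finset.insert_erase hie
        rw [← key e1 h1.2.1 h1.2.2, ← key e2 h2.2.1 h2.2.2, heq]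
    have hSi : a i = ((E.filter (fun e => i ∈ e)).filter (fun e => j ∈ e)).card + S.card := by
      rw [hdeg i, rdeg, ← Finset.card_filter_add_card_filter_not (s := E.filter (fun e => i ∈ e)) (p := fun e => j ∈ e)]
      congr 1
      · simp [hS, Finset.filter_filter, and_comm]
    have hTj : a j = ((E.filter (fun e => i ∈ e)).filter (fun e => j ∈ e)).card + T.card := by
      rw [hdeg j, rdeg, ← Finset.card_filter_add_card_filter_not (s := E.filter (fun e => j ∈ e)) (p := fun e => i ∈ e)]
      congr 1
      · rw [Finset.filter_filter, Finset.filter_filter]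
        congr 1
        ext x
        simp only [Finset.mem_filter]
        tauto
      · simp [hT, Finset.filter_filter, and_comm]
    omega
  obtain ⟨e, heE, hie, hje, hfE⟩ := key
  have hjei : j ∉ e.erase i := fun hx => hje (Finset.mem_of_mem_erase hx)
  have hfne : swap e ∉ E.erase e := fun hx => hfE (Finset.mem_of_mem_erase hx)
  refine ⟨insert (swap e) (E.erase e), ?_, ?_⟩
  · intro f hf
    rcases Finset.mem_insert.mp hf with rfl | hf
    · rw [hswap]
      rw [Finset.card_insert_of_notMem hjei, Finset.card_erase_of_mem hie]
      have := hEcard e heE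
      have hpos : 1 ≤ e.card := Finset.card_pos.mpr ⟨i, hie⟩
      omega
    · exact hEcard f (Finset.mem_of_mem_erase hf)
  · intro v
    have hfilt : rdeg (insert (swap e) (E.erase e)) v =
        (if v ∈ swap e then 1 else 0) + ((E.filter (fun e => v ∈ e)).erase e).card := by
      rw [rdeg, Finset.filter_insert]
      by_cases hvf : v ∈ swap e
      · rw [if_pos hvf, if_pos hvf, Finset.filter_erase,
          Finset.card_insert_of_notMem, Nat.add_comm]
        intro hx
        rcases Finset.mem_erase.mp hx with ⟨hne, hmem⟩
        exact hfne (Finset.mem_erase.mpr ⟨hne, (Finset.mem_filter.mp hmem).1⟩)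
      · rw [if_neg hvf, if_neg hvf, Finset.filter_erase, Nat.zero_add]
    have herase : ((E.filter (fun e => v ∈ e)).erase e).card =
        rdeg E v - (if v ∈ e then 1 else 0) := by
      by_cases hv : v ∈ e
      · rw [Finset.card_erase_of_mem (Finset.mem_filter.mpr ⟨heE, hv⟩), if_pos hv, rdeg]
      · have hne : e ∉ E.filter (fun e => v ∈ e) := fun hx => hv (Finset.mem_filter.mp hx).2
        rw [Finset.erase_eq_of_notMem hne, if_neg hv, Nat.sub_zero, rdeg]
    rw [hfilt, herase]
    have hEpos : ∀ w : Fin n, w ∈ e → 1 ≤ rdeg E w := by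
      intro w hw
      exact Finset.card_pos.mpr ⟨e, Finset.mem_filter.mpr ⟨heE, hw⟩⟩
    by_cases hvi : v = i
    · subst hvi
      have h1 : v ∉ swap e := by
        simp [hswap, Finset.mem_insert, Finset.mem_erase, hij]
      rw [if_neg h1, if_pos hie, hbi, hdeg v, Nat.zero_add]
    · by_cases hvj : v = j
      · subst hvj
        have h1 : v ∈ swap e := Finset.mem_insert_self _ _
        rw [if_pos h1, if_neg hje, hbj, hdeg v, Nat.sub_zero, Nat.add_comm]
      · have hmem : v ∈ swap e ↔ v ∈ e := by
          simp [hswap, Finset.mem_insert, Finset.mem_erase, hvi, hvj]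
        rw [hbk v hvi hvj, hdeg v]
        by_cases hv : v ∈ e
        · rw [if_pos (hmem.mpr hv), if_pos hv]
          have := hEpos v hv
          omega
        · rw [if_neg (fun hx => hv (hmem.mp hx)), if_neg hv, Nat.sub_zero, Nat.zero_add]
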